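/- arXiv:2511.15135 — 2 statements merged into one kernel-verified Lean document; each statement's English description precedes it below -/
import Mathlib

section
/- The entropic Ruzsa distance satisfies the entropy comparison bound: for any ℚ-valued discrete random variables X and Y, |H[X] - H[Y]| ≤ 2 d[X; Y]. -/
open scoped Classical
open Finset

/-- Probability of an event under a weight function on a finite sample space. -/
noncomputable def prb {Ω : Type*} [Fintype Ω] (μ : Ω → ℝ) (E : Set Ω) : ℝ :=
  ∑ ω ∈ Finset.univ.filter (fun ω => ω ∈ E), μ ω

/-- `μ` is a probability mass function on the finite space `Ω`. -/
def IsProb {Ω : Type*} [Fintype Ω] (μ : Ω → ℝ) : Prop :=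
  (∀ ω, 0 ≤ μ ω) ∧ ∑ ω, μ ω = 1

/-- Shannon entropy of a random variable `X` on a finite probability space. -/
noncomputable def ent {Ω S : Type*} [Fintype Ω] (μ : Ω → ℝ) (X : Ω → S) : ℝ :=
  ∑ s ∈ Finset.univ.image X, Real.negMulLog (prb μ {ω | X ω = s})

/-- Independence of two random variables. -/
def IndepRV {Ω S T : Type*} [Fintype Ω] (μ : Ω → ℝ) (X : Ω → S) (Y : Ω → T) : Prop :=
  ∀ x y, prb μ {ω | X ω = x ∧ Y ω = y} = prb μ {ω | X ω = x} * prb μ {ω | Y ω = y}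

/-- Conditional Shannon entropy `H[X|Z] = H[X,Z] - H[Z]`. -/
noncomputable def condEnt {Ω S T : Type*} [Fintype Ω] (μ : Ω → ℝ) (X : Ω → S) (Z : Ω → T) : ℝ :=
  ent μ (fun ω => (X ω, Z ω)) - ent μ Z

/-- Entropic Ruzsa distance `d[X;Y] = H[X'-Y'] - H[X]/2 - H[Y]/2`,
realized on the product space so that the copies are independent. -/
noncomputable def rdist {Ω₁ Ω₂ : Type*} [Fintype Ω₁] [Fintype Ω₂]
    (μ₁ : Ω₁ → ℝ) (μ₂ : Ω₂ → ℝ) (X : Ω₁ → ℚ) (Y : Ω₂ → ℚ) : ℝ :=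
  ent (fun p : Ω₁ × Ω₂ => μ₁ p.1 * μ₂ p.2) (fun p => X p.1 - Y p.2)
    - ent μ₁ X / 2 - ent μ₂ Y / 2

/-- The quantity `g(a) = H[X - a X'] - H[X]`, where `X'` is an independent copy of `X`. -/
noncomputable def gfun {Ω : Type*} [Fintype Ω] (μ : Ω → ℝ) (X : Ω → ℚ) (a : ℚ) : ℝ :=
  ent (fun p : Ω × Ω => μ p.1 * μ p.2) (fun p => X p.1 - a * X p.2) - ent μ X

/-- Projection `π_r(x,y) = x + r y` for a finite slope `some r`, and `π_∞(x,y) = y`. -/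
noncomputable def pSlope : Option ℚ → ℚ × ℚ → ℚ
  | none, p => p.2
  | some r, p => p.1 + r * p.2

/-- The measure `μ` conditioned on the event `Z = z`. -/
noncomputable def condMeasure {Ω T : Type*} [Fintype Ω] (μ : Ω → ℝ) (Z : Ω → T) (z : T) :
    Ω → ℝ :=
  fun ω => if Z ω = z then μ ω / prb μ {ω' | Z ω' = z} else 0

/-- `E_{Z=z} d[X|Z=z ; X|Z=z]`, the averaged conditional entropic Ruzsa self-distance. -/
noncomputable def condSelfDoubling {Ω T : Type*} [Fintype Ω] (μ : Ω → ℝ)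
    (X : Ω → ℚ) (Z : Ω → T) : ℝ :=
  ∑ z ∈ Finset.univ.image Z, prb μ {ω | Z ω = z} *
    rdist (condMeasure μ Z z) (condMeasure μ Z z) X X

lemma prb_nonneg {Ω : Type*} [Fintype Ω] {μ : Ω → ℝ} (h : ∀ ω, 0 ≤ μ ω) (E : Set Ω) :
    0 ≤ prb μ E := Finset.sum_nonneg fun ω _ => h ω

lemma prb_eq_zero {Ω S : Type*} [Fintype Ω] [DecidableEq S] (μ : Ω → ℝ) {X : Ω → S} {s : S}
    (h : s ∉ Finset.univ.image X) : prb μ {ω | X ω = s} = 0 := by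
  unfold prb
  rw [Finset.sum_eq_zero]
  intro ω hω
  simp only [Finset.mem_filter, Set.mem_setOf_eq] at hω
  exact absurd (hω.2 ▸ Finset.mem_image_of_mem X (Finset.mem_univ ω)) h

lemma ent_eq {Ω S : Type*} [Fintype Ω] [DecidableEq S] (μ : Ω → ℝ) (X : Ω → S) :
    ent μ X = ∑ s ∈ Finset.univ.image X, Real.negMulLog (prb μ {ω | X ω = s}) := by
  unfold ent; congr!

lemma sum_prb_image {Ω S : Type*} [Fintype Ω] [DecidableEq S] (μ : Ω → ℝ) (X : Ω → S) :
    ∑ s ∈ Finset.univ.image X, prb μ {ω | X ω = s} = ∑ ω, μ ω := by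
  unfold prb
  rw [← Finset.sum_fiberwise_of_maps_to (fun ω _ => Finset.mem_image_of_mem X (Finset.mem_univ ω)) μ]
  exact Finset.sum_congr rfl fun s _ => Finset.sum_congr (by ext ω; simp) fun _ _ => rfl

lemma prb_sub_eq_left {Ω₁ Ω₂ : Type*} [Fintype Ω₁] [Fintype Ω₂]
    (μ₁ : Ω₁ → ℝ) (μ₂ : Ω₂ → ℝ) (X : Ω₁ → ℚ) (Y : Ω₂ → ℚ) (s : ℚ) :
    prb (fun p : Ω₁ × Ω₂ => μ₁ p.1 * μ₂ p.2) {p | X p.1 - Y p.2 = s}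
      = ∑ y ∈ Finset.univ.image Y, prb μ₂ {ω | Y ω = y} * prb μ₁ {ω | X ω = s + y} := by
  have h1 : prb (fun p : Ω₁ × Ω₂ => μ₁ p.1 * μ₂ p.2) {p | X p.1 - Y p.2 = s}
      = ∑ ω₂ : Ω₂, μ₂ ω₂ * prb μ₁ {ω | X ω = s + Y ω₂} := by
    unfold prb
    rw [Finset.sum_filter, Fintype.sum_prod_type_right]
    refine Finset.sum_congr rfl fun ω₂ _ => ?_
    rw [Finset.sum_filter, Finset.mul_sum]
    refine Finset.sum_congr rfl fun ω₁ _ => ?_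
    simp only [Set.mem_setOf_eq, sub_eq_iff_eq_add]
    split_ifs <;> ring
  rw [h1, ← Finset.sum_fiberwise_of_maps_to
      (fun ω₂ _ => Finset.mem_image_of_mem Y (Finset.mem_univ ω₂))
      (fun ω₂ => μ₂ ω₂ * prb μ₁ {ω | X ω = s + Y ω₂})]
  refine Finset.sum_congr rfl fun y _ => ?_
  rw [show prb μ₂ {ω | Y ω = y} = ∑ ω₂ ∈ Finset.univ.filter (fun ω₂ => Y ω₂ = y), μ₂ ω₂ by unfold prb; exact Finset.sum_congr (by ext ω; simp) fun _ _ => rfl,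
      Finset.sum_mul]
  refine Finset.sum_congr rfl fun ω₂ hω₂ => ?_
  rw [(Finset.mem_filter.1 hω₂).2]

lemma prb_sub_eq_right {Ω₁ Ω₂ : Type*} [Fintype Ω₁] [Fintype Ω₂]
    (μ₁ : Ω₁ → ℝ) (μ₂ : Ω₂ → ℝ) (X : Ω₁ → ℚ) (Y : Ω₂ → ℚ) (s : ℚ) :
    prb (fun p : Ω₁ × Ω₂ => μ₁ p.1 * μ₂ p.2) {p | X p.1 - Y p.2 = s}
      = ∑ x ∈ Finset.univ.image X, prb μ₁ {ω | X ω = x} * prb μ₂ {ω | Y ω = x - s} := by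
  have h1 : prb (fun p : Ω₁ × Ω₂ => μ₁ p.1 * μ₂ p.2) {p | X p.1 - Y p.2 = s}
      = ∑ ω₁ : Ω₁, μ₁ ω₁ * prb μ₂ {ω | Y ω = X ω₁ - s} := by
    unfold prb
    rw [Finset.sum_filter, Fintype.sum_prod_type]
    refine Finset.sum_congr rfl fun ω₁ _ => ?_
    rw [Finset.sum_filter, Finset.mul_sum]
    refine Finset.sum_congr rfl fun ω₂ _ => ?_
    simp only [Set.mem_setOf_eq]
    split_ifs with h1 h2 h2
    · ring
    · exact absurd (by linarith) h2
    · exact absurd (by linarith) h1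
    · ring
  rw [h1, ← Finset.sum_fiberwise_of_maps_to
      (fun ω₁ _ => Finset.mem_image_of_mem X (Finset.mem_univ ω₁))
      (fun ω₁ => μ₁ ω₁ * prb μ₂ {ω | Y ω = X ω₁ - s})]
  refine Finset.sum_congr rfl fun x _ => ?_
  rw [show prb μ₁ {ω | X ω = x} = ∑ ω₁ ∈ Finset.univ.filter (fun ω₁ => X ω₁ = x), μ₁ ω₁ by
        unfold prb; exact Finset.sum_congr (by ext ω; simp) fun _ _ => rfl, Finset.sum_mul]
  refine Finset.sum_congr rfl fun ω₁ hω₁ => ?_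
  rw [(Finset.mem_filter.1 hω₁).2]

lemma ent_left_le {Ω₁ Ω₂ : Type*} [Fintype Ω₁] [Fintype Ω₂]
    (μ₁ : Ω₁ → ℝ) (μ₂ : Ω₂ → ℝ) (hμ₁ : IsProb μ₁) (hμ₂ : IsProb μ₂)
    (X : Ω₁ → ℚ) (Y : Ω₂ → ℚ) :
    ent μ₁ X ≤ ent (fun p : Ω₁ × Ω₂ => μ₁ p.1 * μ₂ p.2) (fun p => X p.1 - Y p.2) := by
  set Z : Ω₁ × Ω₂ → ℚ := fun p => X p.1 - Y p.2 with hZ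
  have hq1 : ∑ y ∈ Finset.univ.image Y, prb μ₂ {ω | Y ω = y} = 1 :=
    (sum_prb_image μ₂ Y).trans hμ₂.2
  have jensen : ∀ s ∈ Finset.univ.image Z,
      ∑ y ∈ Finset.univ.image Y,
        prb μ₂ {ω | Y ω = y} * Real.negMulLog (prb μ₁ {ω | X ω = s + y})
      ≤ Real.negMulLog (prb (fun p : Ω₁ × Ω₂ => μ₁ p.1 * μ₂ p.2) {p | Z p = s}) := by
    intro s _
    rw [show {p : Ω₁ × Ω₂ | Z p = s} = {p | X p.1 - Y p.2 = s} from rfl, prb_sub_eq_left]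
    have := Real.concaveOn_negMulLog.le_map_sum (t := Finset.univ.image Y)
      (w := fun y => prb μ₂ {ω | Y ω = y}) (p := fun y => prb μ₁ {ω | X ω = s + y})
      (fun y _ => prb_nonneg hμ₂.1 _) hq1 (fun y _ => prb_nonneg hμ₁.1 _)
    simpa [smul_eq_mul] using this
  have hinner : ∀ y ∈ Finset.univ.image Y,
      ∑ s ∈ Finset.univ.image Z, Real.negMulLog (prb μ₁ {ω | X ω = s + y}) = ent μ₁ X := by
    intro y hy
    obtain ⟨ω₂, _, hω₂⟩ := Finset.mem_image.1 hy
    have hmap : ∑ s ∈ Finset.univ.image Z, Real.negMulLog (prb μ₁ {ω | X ω = s + y})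
        = ∑ t ∈ (Finset.univ.image Z).image (fun s => s + y),
            Real.negMulLog (prb μ₁ {ω | X ω = t}) := by
      exact (Finset.sum_image (s := Finset.univ.image Z) (g := fun s => s + y)
        (f := fun t => Real.negMulLog (prb μ₁ {ω | X ω = t}))
        (fun a _ b _ h => by simpa using h)).symm
    have hsub : Finset.univ.image X ⊆ (Finset.univ.image Z).image (fun s => s + y) := by
      intro t ht
      obtain ⟨ω₁, _, hω₁⟩ := Finset.mem_image.1 ht
      refine Finset.mem_image.2 ⟨t - y, Finset.mem_image.2 ⟨(ω₁, ω₂), Finset.mem_univ _, ?_⟩, by ring⟩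
      simp [hZ, hω₁, hω₂]
    rw [hmap, ent_eq, ← Finset.sum_subset hsub]
    intro t _ ht
    rw [prb_eq_zero μ₁ ht, Real.negMulLog_zero]
  calc ent μ₁ X = ∑ y ∈ Finset.univ.image Y, prb μ₂ {ω | Y ω = y} * ent μ₁ X := by
        rw [← Finset.sum_mul, hq1, one_mul]
    _ = ∑ y ∈ Finset.univ.image Y, ∑ s ∈ Finset.univ.image Z,
          prb μ₂ {ω | Y ω = y} * Real.negMulLog (prb μ₁ {ω | X ω = s + y}) := by
        refine Finset.sum_congr rfl fun y hy => ?_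
        rw [← Finset.mul_sum, hinner y hy]
    _ = ∑ s ∈ Finset.univ.image Z, ∑ y ∈ Finset.univ.image Y,
          prb μ₂ {ω | Y ω = y} * Real.negMulLog (prb μ₁ {ω | X ω = s + y}) :=
        Finset.sum_comm
    _ ≤ ∑ s ∈ Finset.univ.image Z,
          Real.negMulLog (prb (fun p : Ω₁ × Ω₂ => μ₁ p.1 * μ₂ p.2) {p | Z p = s}) :=
        Finset.sum_le_sum jensen
    _ = _ := (ent_eq _ _).symm

lemma ent_right_le {Ω₁ Ω₂ : Type*} [Fintype Ω₁] [Fintype Ω₂]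
    (μ₁ : Ω₁ → ℝ) (μ₂ : Ω₂ → ℝ) (hμ₁ : IsProb μ₁) (hμ₂ : IsProb μ₂)
    (X : Ω₁ → ℚ) (Y : Ω₂ → ℚ) :
    ent μ₂ Y ≤ ent (fun p : Ω₁ × Ω₂ => μ₁ p.1 * μ₂ p.2) (fun p => X p.1 - Y p.2) := by
  set Z : Ω₁ × Ω₂ → ℚ := fun p => X p.1 - Y p.2 with hZ
  have hq1 : ∑ x ∈ Finset.univ.image X, prb μ₁ {ω | X ω = x} = 1 :=
    (sum_prb_image μ₁ X).trans hμ₁.2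
  have jensen : ∀ s ∈ Finset.univ.image Z,
      ∑ x ∈ Finset.univ.image X,
        prb μ₁ {ω | X ω = x} * Real.negMulLog (prb μ₂ {ω | Y ω = x - s})
      ≤ Real.negMulLog (prb (fun p : Ω₁ × Ω₂ => μ₁ p.1 * μ₂ p.2) {p | Z p = s}) := by
    intro s _
    rw [show {p : Ω₁ × Ω₂ | Z p = s} = {p | X p.1 - Y p.2 = s} from rfl, prb_sub_eq_right]
    have := Real.concaveOn_negMulLog.le_map_sum (t := Finset.univ.image X)
      (w := fun x => prb μ₁ {ω | X ω = x}) (p := fun x => prb μ₂ {ω | Y ω = x - s})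
      (fun x _ => prb_nonneg hμ₁.1 _) hq1 (fun x _ => prb_nonneg hμ₂.1 _)
    simpa [smul_eq_mul] using this
  have hinner : ∀ x ∈ Finset.univ.image X,
      ∑ s ∈ Finset.univ.image Z, Real.negMulLog (prb μ₂ {ω | Y ω = x - s}) = ent μ₂ Y := by
    intro x hx
    obtain ⟨ω₁, _, hω₁⟩ := Finset.mem_image.1 hx
    have hmap : ∑ s ∈ Finset.univ.image Z, Real.negMulLog (prb μ₂ {ω | Y ω = x - s})
        = ∑ t ∈ (Finset.univ.image Z).image (fun s => x - s),
            Real.negMulLog (prb μ₂ {ω | Y ω = t}) := by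
      exact (Finset.sum_image (s := Finset.univ.image Z) (g := fun s => x - s)
        (f := fun t => Real.negMulLog (prb μ₂ {ω | Y ω = t}))
        (fun a _ b _ h => by simpa using h)).symm
    have hsub : Finset.univ.image Y ⊆ (Finset.univ.image Z).image (fun s => x - s) := by
      intro t ht
      obtain ⟨ω₂, _, hω₂⟩ := Finset.mem_image.1 ht
      refine Finset.mem_image.2 ⟨x - t, Finset.mem_image.2 ⟨(ω₁, ω₂), Finset.mem_univ _, ?_⟩, by ring⟩
      simp [hZ, hω₁, hω₂]
    rw [hmap, ent_eq, ← Finset.sum_subset hsub]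
    intro t _ ht
    rw [prb_eq_zero μ₂ ht, Real.negMulLog_zero]
  calc ent μ₂ Y = ∑ x ∈ Finset.univ.image X, prb μ₁ {ω | X ω = x} * ent μ₂ Y := by
        rw [← Finset.sum_mul, hq1, one_mul]
    _ = ∑ x ∈ Finset.univ.image X, ∑ s ∈ Finset.univ.image Z,
          prb μ₁ {ω | X ω = x} * Real.negMulLog (prb μ₂ {ω | Y ω = x - s}) := by
        refine Finset.sum_congr rfl fun x hx => ?_
        rw [← Finset.mul_sum, hinner x hx]
    _ = ∑ s ∈ Finset.univ.image Z, ∑ x ∈ Finset.univ.image X,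
          prb μ₁ {ω | X ω = x} * Real.negMulLog (prb μ₂ {ω | Y ω = x - s}) :=
        Finset.sum_comm
    _ ≤ ∑ s ∈ Finset.univ.image Z,
          Real.negMulLog (prb (fun p : Ω₁ × Ω₂ => μ₁ p.1 * μ₂ p.2) {p | Z p = s}) :=
        Finset.sum_le_sum jensen
    _ = _ := (ent_eq _ _).symm

/-- the entropic Ruzsa distance satisfies `|H[X] - H[Y]| ≤ 2 d[X;Y]`. -/
theorem abs_ent_sub_le_two_rdist {Ω₁ Ω₂ : Type*} [Fintype Ω₁] [Fintype Ω₂]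
    (μ₁ : Ω₁ → ℝ) (μ₂ : Ω₂ → ℝ) (hμ₁ : IsProb μ₁) (hμ₂ : IsProb μ₂)
    (X : Ω₁ → ℚ) (Y : Ω₂ → ℚ) :
    |ent μ₁ X - ent μ₂ Y| ≤ 2 * rdist μ₁ μ₂ X Y := by
  have hL := ent_left_le μ₁ μ₂ hμ₁ hμ₂ X Y
  have hR := ent_right_le μ₁ μ₂ hμ₁ hμ₂ X Y
  unfold rdist
  rw [abs_sub_le_iff]
  constructor <;> linarith
end

section
/- (Conditional entropic BSG, first form) Let X, Y be ℚ-valued discrete random variables and Z a further discrete random variable, all on a common probability space. Let (X', Y, Z) be a copy of (X, Y, Z) with X and X' conditionally independent given (Y, Z). Then H[X - X' | Y, Z] ≤ 2 H[X + Y | Z] + H[Y | Z] + 2 H[X | Z] - 2 H[X, Y | Z]. -/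
open scoped Classical
open Finset

/-- image with a frozen (classical) decidability instance -/
noncomputable def img {Ω S : Type*} [Fintype Ω] (W : Ω → S) : Finset S :=
  Finset.univ.image W

/-- filter with a frozen (classical) decidability instance -/
noncomputable def filt {S : Type*} (t : Finset S) (p : S → Prop) : Finset S :=
  t.filter p

section Aux
variable {Ω : Type*} [Fintype Ω] {S V : Type*}

lemma mem_filt {t : Finset S} {p : S → Prop} {s : S} : s ∈ filt t p ↔ s ∈ t ∧ p s := by
  unfold filt
  exact Finset.mem_filter

lemma filt_subset (t : Finset S) (p : S → Prop) : filt t p ⊆ t := Finset.filter_subset _ _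

lemma mem_img_of (W : Ω → S) (ω : Ω) : W ω ∈ img W :=
  Finset.mem_image_of_mem W (Finset.mem_univ ω)

lemma mem_img {W : Ω → S} {s : S} : s ∈ img W ↔ ∃ ω, W ω = s := by
  unfold img
  simp [Finset.mem_image]

lemma prb_congr (μ : Ω → ℝ) {E F : Set Ω} (h : ∀ ω, ω ∈ E ↔ ω ∈ F) : prb μ E = prb μ F := by
  have : E = F := Set.ext h
  rw [this]

noncomputable def pm (μ : Ω → ℝ) (W : Ω → S) (s : S) : ℝ := prb μ {ω | W ω = s}

lemma pm_eq (μ : Ω → ℝ) (W : Ω → S) (s : S) :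
    pm μ W s = ∑ ω ∈ Finset.univ.filter (fun ω => W ω = s), μ ω := rfl

lemma pm_nonneg (μ : Ω → ℝ) (hμ0 : ∀ ω, 0 ≤ μ ω) (W : Ω → S) (s : S) : 0 ≤ pm μ W s :=
  Finset.sum_nonneg fun ω _ => hμ0 ω

lemma pm_mono (μ : Ω → ℝ) (hμ0 : ∀ ω, 0 ≤ μ ω) (W : Ω → S) (φ : S → V) (s : S) :
    pm μ W s ≤ pm μ (fun ω => φ (W ω)) (φ s) := by
  rw [pm_eq, pm_eq]
  apply Finset.sum_le_sum_of_subset_of_nonneg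
  · intro ω hω
    simp only [mem_filter, mem_univ, true_and] at hω ⊢
    rw [hω]
  · intro ω _ _; exact hμ0 ω

lemma pm_zero (μ : Ω → ℝ) (W : Ω → S) {s : S} (h : s ∉ img W) :
    pm μ W s = 0 := by
  rw [pm_eq]
  rw [Finset.filter_false_of_mem, Finset.sum_empty]
  intro ω _
  intro hc
  exact h (by rw [← hc]; exact mem_img_of W ω)

lemma sum_pm (μ : Ω → ℝ) (W : Ω → S) :
    ∑ s ∈ img W, pm μ W s = ∑ ω, μ ω := by
  unfold img
  rw [← Finset.sum_fiberwise_of_maps_to (fun ω _ => Finset.mem_image_of_mem W (mem_univ ω)) μ]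
  exact Finset.sum_congr rfl fun s _ => pm_eq μ W s

lemma pm_comp (μ : Ω → ℝ) (W : Ω → S) (φ : S → V) (v : V) :
    pm μ (fun ω => φ (W ω)) v
      = ∑ s ∈ filt (img W) (fun s => φ s = v), pm μ W s := by
  unfold filt img
  have h := Finset.sum_fiberwise_of_maps_to
    (s := Finset.univ.filter (fun ω => φ (W ω) = v))
    (t := (Finset.univ.image W).filter (fun s => φ s = v)) (g := W)
    (fun ω hω => by
      simp only [mem_filter, mem_univ, true_and] at hω ⊢
      exact ⟨Finset.mem_image_of_mem W (mem_univ ω), hω⟩) μ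
  rw [pm_eq, ← h]
  apply Finset.sum_congr rfl
  intro s hs
  rw [pm_eq]
  apply Finset.sum_congr _ (fun _ _ => rfl)
  ext ω
  simp only [mem_filter, mem_univ, true_and, and_iff_right_iff_imp]
  intro hws
  rw [hws]
  exact (Finset.mem_filter.1 hs).2

lemma ent_eq_pm (μ : Ω → ℝ) (W : Ω → S) :
    ent μ W = ∑ s ∈ img W, Real.negMulLog (pm μ W s) := rfl

lemma ent_eq_pm_log (μ : Ω → ℝ) (W : Ω → S) :
    ent μ W = ∑ s ∈ img W, -(pm μ W s * Real.log (pm μ W s)) := by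
  rw [ent_eq_pm]
  exact Finset.sum_congr rfl fun s _ => by rw [Real.negMulLog, neg_mul]

lemma img_comp (W : Ω → S) (φ : S → V) : img (fun ω => φ (W ω)) = (img W).image φ := by
  unfold img
  rw [Finset.image_image]
  rfl

lemma ent_comp_eq_sum (μ : Ω → ℝ) (W : Ω → S) (φ : S → V) :
    ent μ (fun ω => φ (W ω))
      = ∑ s ∈ img W,
          -(pm μ W s * Real.log (pm μ (fun ω => φ (W ω)) (φ s))) := by
  rw [ent_eq_pm, img_comp,
    ← Finset.sum_fiberwise_of_maps_to (s := img W)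
      (t := (img W).image φ) (g := φ)
      (fun s hs => Finset.mem_image_of_mem φ hs)
      (f := fun s => -(pm μ W s * Real.log (pm μ (fun ω => φ (W ω)) (φ s))))]
  apply Finset.sum_congr rfl
  intro v hv
  rw [Real.negMulLog, neg_mul]
  have hper : ∀ s ∈ (img W).filter (fun s => φ s = v),
      -(pm μ W s * Real.log (pm μ (fun ω => φ (W ω)) (φ s)))
        = -(pm μ W s * Real.log (pm μ (fun ω => φ (W ω)) v)) := by
    intro s hs
    rw [(Finset.mem_filter.1 hs).2]
  have hfilt : ∑ s ∈ filt (img W) (fun s => φ s = v), pm μ W s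
      = ∑ s ∈ (img W).filter (fun s => φ s = v), pm μ W s := by
    unfold filt
    rfl
  rw [Finset.sum_congr rfl hper, Finset.sum_neg_distrib, ← Finset.sum_mul, ← hfilt, ← pm_comp]

end Aux

section Aux2
variable {Ω : Type*} [Fintype Ω] {S V : Type*}

lemma ent_congr_fun (μ : Ω → ℝ) {W₁ W₂ : Ω → S} (h : ∀ ω, W₁ ω = W₂ ω) :
    ent μ W₁ = ent μ W₂ :=
  congrArg (ent μ) (funext h)

lemma ent_comp_inj (μ : Ω → ℝ) (W : Ω → S) (g : S → V) (hg : Function.Injective g) :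
    ent μ (fun ω => g (W ω)) = ent μ W := by
  rw [ent_eq_pm, ent_eq_pm, img_comp, Finset.sum_image (fun s _ t _ h => hg h)]
  apply Finset.sum_congr rfl
  intro s _
  congr 1
  apply prb_congr
  intro ω
  simp only [Set.mem_setOf_eq]
  exact hg.eq_iff

lemma ent_congr_pm (μ : Ω → ℝ) {W₁ W₂ : Ω → S} (h : ∀ s, pm μ W₁ s = pm μ W₂ s) :
    ent μ W₁ = ent μ W₂ := by
  rw [ent_eq_pm, ent_eq_pm]
  have h1 : ∑ s ∈ img W₁, Real.negMulLog (pm μ W₁ s)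
      = ∑ s ∈ img W₁ ∪ img W₂, Real.negMulLog (pm μ W₁ s) :=
    Finset.sum_subset Finset.subset_union_left
      (fun s _ hs => by rw [pm_zero μ W₁ hs, Real.negMulLog_zero])
  have h2 : ∑ s ∈ img W₂, Real.negMulLog (pm μ W₂ s)
      = ∑ s ∈ img W₁ ∪ img W₂, Real.negMulLog (pm μ W₂ s) :=
    Finset.sum_subset Finset.subset_union_right
      (fun s _ hs => by rw [pm_zero μ W₂ hs, Real.negMulLog_zero])
  rw [h1, h2]
  exact Finset.sum_congr rfl fun s _ => by rw [h s]

lemma pm_comp_congr (μ : Ω → ℝ) {W₁ W₂ : Ω → S} (h : ∀ s, pm μ W₁ s = pm μ W₂ s)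
    (φ : S → V) (v : V) :
    pm μ (fun ω => φ (W₁ ω)) v = pm μ (fun ω => φ (W₂ ω)) v := by
  rw [pm_comp, pm_comp]
  have hsub1 : filt (img W₁) (fun s => φ s = v) ⊆ filt (img W₁ ∪ img W₂) (fun s => φ s = v) := by
    intro s hs
    rw [mem_filt] at hs ⊢
    exact ⟨Finset.mem_union_left _ hs.1, hs.2⟩
  have hsub2 : filt (img W₂) (fun s => φ s = v) ⊆ filt (img W₁ ∪ img W₂) (fun s => φ s = v) := by
    intro s hs
    rw [mem_filt] at hs ⊢
    exact ⟨Finset.mem_union_right _ hs.1, hs.2⟩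
  have h1 : ∑ s ∈ filt (img W₁) (fun s => φ s = v), pm μ W₁ s
      = ∑ s ∈ filt (img W₁ ∪ img W₂) (fun s => φ s = v), pm μ W₁ s := by
    apply Finset.sum_subset hsub1
    intro s hs hns
    apply pm_zero
    intro hmem
    exact hns (mem_filt.2 ⟨hmem, (mem_filt.1 hs).2⟩)
  have h2 : ∑ s ∈ filt (img W₂) (fun s => φ s = v), pm μ W₂ s
      = ∑ s ∈ filt (img W₁ ∪ img W₂) (fun s => φ s = v), pm μ W₂ s := by
    apply Finset.sum_subset hsub2
    intro s hs hns
    apply pm_zero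
    intro hmem
    exact hns (mem_filt.2 ⟨hmem, (mem_filt.1 hs).2⟩)
  rw [h1, h2]
  exact Finset.sum_congr rfl fun s _ => h s

lemma ent_comp_congr_pm (μ : Ω → ℝ) {W₁ W₂ : Ω → S} (h : ∀ s, pm μ W₁ s = pm μ W₂ s)
    (φ : S → V) :
    ent μ (fun ω => φ (W₁ ω)) = ent μ (fun ω => φ (W₂ ω)) :=
  ent_congr_pm μ (pm_comp_congr μ h φ)

end Aux2

section Submod
variable {Ω : Type*} [Fintype Ω]

lemma ent_submod {α β γ : Type*} (μ : Ω → ℝ) (hμ : IsProb μ)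
    (A : Ω → α) (B : Ω → β) (C : Ω → γ) :
    ent μ (fun ω => (A ω, B ω, C ω)) + ent μ C ≤
      ent μ (fun ω => (A ω, C ω)) + ent μ (fun ω => (B ω, C ω)) := by
  obtain ⟨hμ0, hμ1⟩ := hμ
  have habc := ent_eq_pm_log μ (fun ω => (A ω, B ω, C ω))
  have hac : ent μ (fun ω => (A ω, C ω))
      = ∑ s ∈ img (fun ω => (A ω, B ω, C ω)),
        -(pm μ (fun ω => (A ω, B ω, C ω)) s
            * Real.log (pm μ (fun ω => (A ω, C ω)) (s.1, s.2.2))) :=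
    ent_comp_eq_sum μ (fun ω => (A ω, B ω, C ω)) (fun t => (t.1, t.2.2))
  have hbc : ent μ (fun ω => (B ω, C ω))
      = ∑ s ∈ img (fun ω => (A ω, B ω, C ω)),
        -(pm μ (fun ω => (A ω, B ω, C ω)) s
            * Real.log (pm μ (fun ω => (B ω, C ω)) s.2)) :=
    ent_comp_eq_sum μ (fun ω => (A ω, B ω, C ω)) (fun t => t.2)
  have hcc : ent μ C
      = ∑ s ∈ img (fun ω => (A ω, B ω, C ω)),
        -(pm μ (fun ω => (A ω, B ω, C ω)) s * Real.log (pm μ C s.2.2)) :=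
    ent_comp_eq_sum μ (fun ω => (A ω, B ω, C ω)) (fun t => t.2.2)
  rw [habc, hac, hbc, hcc, ← Finset.sum_add_distrib, ← Finset.sum_add_distrib, ← sub_nonneg,
    ← Finset.sum_sub_distrib]
  have key : ∀ s ∈ img (fun ω => (A ω, B ω, C ω)),
      pm μ (fun ω => (A ω, B ω, C ω)) s
        - pm μ (fun ω => (A ω, C ω)) (s.1, s.2.2) * pm μ (fun ω => (B ω, C ω)) s.2
            / pm μ C s.2.2
      ≤ -(pm μ (fun ω => (A ω, B ω, C ω)) s
            * Real.log (pm μ (fun ω => (A ω, C ω)) (s.1, s.2.2)))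
        + -(pm μ (fun ω => (A ω, B ω, C ω)) s
            * Real.log (pm μ (fun ω => (B ω, C ω)) s.2))
        - (-(pm μ (fun ω => (A ω, B ω, C ω)) s
            * Real.log (pm μ (fun ω => (A ω, B ω, C ω)) s))
          + -(pm μ (fun ω => (A ω, B ω, C ω)) s * Real.log (pm μ C s.2.2))) := by
    intro s _
    have hpa : pm μ (fun ω => (A ω, B ω, C ω)) s
        ≤ pm μ (fun ω => (A ω, C ω)) (s.1, s.2.2) :=
      pm_mono μ hμ0 (fun ω => (A ω, B ω, C ω)) (fun t => (t.1, t.2.2)) s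
    have hpb : pm μ (fun ω => (A ω, B ω, C ω)) s ≤ pm μ (fun ω => (B ω, C ω)) s.2 :=
      pm_mono μ hμ0 (fun ω => (A ω, B ω, C ω)) (fun t => t.2) s
    have hpc : pm μ (fun ω => (A ω, B ω, C ω)) s ≤ pm μ C s.2.2 :=
      pm_mono μ hμ0 (fun ω => (A ω, B ω, C ω)) (fun t => t.2.2) s
    set p := pm μ (fun ω => (A ω, B ω, C ω)) s with hpdef
    set a := pm μ (fun ω => (A ω, C ω)) (s.1, s.2.2) with hadef
    set b := pm μ (fun ω => (B ω, C ω)) s.2 with hbdef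
    set c := pm μ C s.2.2 with hcdef
    have ha0 : 0 ≤ a := pm_nonneg μ hμ0 _ _
    have hb0 : 0 ≤ b := pm_nonneg μ hμ0 _ _
    have hc0 : 0 ≤ c := pm_nonneg μ hμ0 _ _
    have hp0 : 0 ≤ p := pm_nonneg μ hμ0 (fun ω => (A ω, B ω, C ω)) s
    rcases eq_or_lt_of_le hp0 with h0 | hpos
    · rw [← h0]
      have hq0 : 0 ≤ a * b / c := div_nonneg (mul_nonneg ha0 hb0) hc0
      simp only [zero_mul, neg_zero, add_zero, zero_sub, sub_zero, neg_neg]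
      linarith
    · have ha' : 0 < a := lt_of_lt_of_le hpos hpa
      have hb' : 0 < b := lt_of_lt_of_le hpos hpb
      have hc' : 0 < c := lt_of_lt_of_le hpos hpc
      have hx : Real.log (a * b / (p * c)) ≤ a * b / (p * c) - 1 :=
        Real.log_le_sub_one_of_pos (by positivity)
      have hlg : Real.log (a * b / (p * c))
          = Real.log a + Real.log b - (Real.log p + Real.log c) := by
        rw [Real.log_div (by positivity) (by positivity), Real.log_mul ha'.ne' hb'.ne',
          Real.log_mul hpos.ne' hc'.ne']
      rw [hlg] at hx
      have h2 := mul_le_mul_of_nonneg_left hx hpos.le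
      have h3 : p * (a * b / (p * c) - 1) = a * b / c - p := by
        field_simp
      rw [h3] at h2
      nlinarith [h2]
  refine le_trans ?_ (Finset.sum_le_sum key)
  rw [Finset.sum_sub_distrib]
  have hsum_p : ∑ s ∈ img (fun ω => (A ω, B ω, C ω)),
      pm μ (fun ω => (A ω, B ω, C ω)) s = 1 := by
    rw [sum_pm]; exact hμ1
  rw [hsum_p]
  have hmapC : ∀ s ∈ img (fun ω => (A ω, B ω, C ω)), s.2.2 ∈ img C := by
    intro s hs
    obtain ⟨ω, rfl⟩ := mem_img.1 hs
    exact mem_img_of C ω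
  have hsum_q : ∑ s ∈ img (fun ω => (A ω, B ω, C ω)),
      pm μ (fun ω => (A ω, C ω)) (s.1, s.2.2) * pm μ (fun ω => (B ω, C ω)) s.2
        / pm μ C s.2.2 ≤ 1 := by
    have hfib : ∑ z ∈ img C, ∑ s ∈ filt (img (fun ω => (A ω, B ω, C ω))) (fun s => s.2.2 = z),
        (pm μ (fun ω => (A ω, C ω)) (s.1, s.2.2) * pm μ (fun ω => (B ω, C ω)) s.2
          / pm μ C s.2.2)
        = ∑ s ∈ img (fun ω => (A ω, B ω, C ω)),
          pm μ (fun ω => (A ω, C ω)) (s.1, s.2.2) * pm μ (fun ω => (B ω, C ω)) s.2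
            / pm μ C s.2.2 := by
      unfold filt
      exact Finset.sum_fiberwise_of_maps_to hmapC _
    rw [← hfib]
    have hc1 : ∑ z ∈ img C, pm μ C z = 1 := by rw [sum_pm]; exact hμ1
    rw [← hc1]
    apply Finset.sum_le_sum
    intro z hz
    by_cases h0 : pm μ C z = 0
    · have hz0 : ∑ s ∈ filt (img (fun ω => (A ω, B ω, C ω))) (fun s => s.2.2 = z),
          (pm μ (fun ω => (A ω, C ω)) (s.1, s.2.2) * pm μ (fun ω => (B ω, C ω)) s.2
            / pm μ C s.2.2) = 0 :=
        Finset.sum_eq_zero fun s hs => by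
          rw [(mem_filt.1 hs).2, h0, div_zero]
      rw [hz0]
      exact pm_nonneg μ hμ0 C z
    · have hcpos : 0 < pm μ C z := lt_of_le_of_ne (pm_nonneg μ hμ0 C z) (Ne.symm h0)
      have hrw : ∑ s ∈ filt (img (fun ω => (A ω, B ω, C ω))) (fun s => s.2.2 = z),
          (pm μ (fun ω => (A ω, C ω)) (s.1, s.2.2) * pm μ (fun ω => (B ω, C ω)) s.2
            / pm μ C s.2.2)
          = (∑ s ∈ filt (img (fun ω => (A ω, B ω, C ω))) (fun s => s.2.2 = z),
              pm μ (fun ω => (A ω, C ω)) (s.1, s.2.2) * pm μ (fun ω => (B ω, C ω)) s.2)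
            / pm μ C z := by
        rw [Finset.sum_div]
        exact Finset.sum_congr rfl fun s hs => by rw [(mem_filt.1 hs).2]
      rw [hrw, div_le_iff₀ hcpos]
      have himg : ∑ s ∈ filt (img (fun ω => (A ω, B ω, C ω))) (fun s => s.2.2 = z),
          pm μ (fun ω => (A ω, C ω)) (s.1, s.2.2) * pm μ (fun ω => (B ω, C ω)) s.2
          = ∑ u ∈ (filt (img (fun ω => (A ω, B ω, C ω))) (fun s => s.2.2 = z)).image
              (fun s => ((s.1, s.2.2), s.2)),
              pm μ (fun ω => (A ω, C ω)) u.1 * pm μ (fun ω => (B ω, C ω)) u.2 := by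
        rw [Finset.sum_image]
        intro s _ t _ h
        simp only [Prod.mk.injEq] at h
        obtain ⟨⟨h1, _⟩, h2⟩ := h
        exact Prod.ext h1 h2
      rw [himg]
      have hsub : (filt (img (fun ω => (A ω, B ω, C ω))) (fun s => s.2.2 = z)).image
            (fun s => ((s.1, s.2.2), s.2))
          ⊆ (filt (img (fun ω => (A ω, C ω))) (fun u => u.2 = z))
            ×ˢ (filt (img (fun ω => (B ω, C ω))) (fun u => u.2 = z)) := by
        intro u hu
        obtain ⟨s, hs, rfl⟩ := Finset.mem_image.1 hu
        obtain ⟨hsT, hsz⟩ := mem_filt.1 hs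
        obtain ⟨ω, rfl⟩ := mem_img.1 hsT
        rw [Finset.mem_product]
        exact ⟨mem_filt.2 ⟨mem_img_of (fun ω => (A ω, C ω)) ω, hsz⟩,
          mem_filt.2 ⟨mem_img_of (fun ω => (B ω, C ω)) ω, hsz⟩⟩
      calc ∑ u ∈ (filt (img (fun ω => (A ω, B ω, C ω))) (fun s => s.2.2 = z)).image
              (fun s => ((s.1, s.2.2), s.2)),
              pm μ (fun ω => (A ω, C ω)) u.1 * pm μ (fun ω => (B ω, C ω)) u.2
          ≤ ∑ u ∈ (filt (img (fun ω => (A ω, C ω))) (fun u => u.2 = z))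
              ×ˢ (filt (img (fun ω => (B ω, C ω))) (fun u => u.2 = z)),
              pm μ (fun ω => (A ω, C ω)) u.1 * pm μ (fun ω => (B ω, C ω)) u.2 :=
            Finset.sum_le_sum_of_subset_of_nonneg hsub
              (fun u _ _ => mul_nonneg (pm_nonneg μ hμ0 _ _) (pm_nonneg μ hμ0 _ _))
        _ = (∑ u ∈ filt (img (fun ω => (A ω, C ω))) (fun u => u.2 = z),
              pm μ (fun ω => (A ω, C ω)) u)
            * ∑ u ∈ filt (img (fun ω => (B ω, C ω))) (fun u => u.2 = z),
              pm μ (fun ω => (B ω, C ω)) u := by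
            rw [Finset.sum_product, Finset.sum_mul_sum]
        _ = pm μ C z * pm μ C z := by
            have hA : pm μ C z = ∑ u ∈ filt (img (fun ω => (A ω, C ω))) (fun u => u.2 = z),
                pm μ (fun ω => (A ω, C ω)) u :=
              pm_comp μ (fun ω => (A ω, C ω)) (fun u => u.2) z
            have hB : pm μ C z = ∑ u ∈ filt (img (fun ω => (B ω, C ω))) (fun u => u.2 = z),
                pm μ (fun ω => (B ω, C ω)) u :=
              pm_comp μ (fun ω => (B ω, C ω)) (fun u => u.2) z
            rw [← hA, ← hB]
  linarith [hsum_q]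

end Submod

section CondInd
variable {Ω : Type*} [Fintype Ω]

lemma ent_condindep {T : Type*} (μ : Ω → ℝ) (hμ0 : ∀ ω, 0 ≤ μ ω)
    (X X' Y : Ω → ℚ) (Z : Ω → T)
    (hci : ∀ (x x' y : ℚ) (z : T),
      prb μ {ω | X ω = x ∧ X' ω = x' ∧ Y ω = y ∧ Z ω = z} * prb μ {ω | Y ω = y ∧ Z ω = z} =
        prb μ {ω | X ω = x ∧ Y ω = y ∧ Z ω = z} *
          prb μ {ω | X' ω = x' ∧ Y ω = y ∧ Z ω = z}) :
    ent μ (fun ω => (X ω, X' ω, Y ω, Z ω))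
      = ent μ (fun ω => (X ω, Y ω, Z ω)) + ent μ (fun ω => (X' ω, Y ω, Z ω))
        - ent μ (fun ω => (Y ω, Z ω)) := by
  have ha : ent μ (fun ω => (X ω, Y ω, Z ω))
      = ∑ s ∈ img (fun ω => (X ω, X' ω, Y ω, Z ω)),
        -(pm μ (fun ω => (X ω, X' ω, Y ω, Z ω)) s
            * Real.log (pm μ (fun ω => (X ω, Y ω, Z ω)) (s.1, s.2.2))) :=
    ent_comp_eq_sum μ (fun ω => (X ω, X' ω, Y ω, Z ω)) (fun t => (t.1, t.2.2))
  have hb : ent μ (fun ω => (X' ω, Y ω, Z ω))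
      = ∑ s ∈ img (fun ω => (X ω, X' ω, Y ω, Z ω)),
        -(pm μ (fun ω => (X ω, X' ω, Y ω, Z ω)) s
            * Real.log (pm μ (fun ω => (X' ω, Y ω, Z ω)) s.2)) :=
    ent_comp_eq_sum μ (fun ω => (X ω, X' ω, Y ω, Z ω)) (fun t => t.2)
  have hq : ent μ (fun ω => (Y ω, Z ω))
      = ∑ s ∈ img (fun ω => (X ω, X' ω, Y ω, Z ω)),
        -(pm μ (fun ω => (X ω, X' ω, Y ω, Z ω)) s
            * Real.log (pm μ (fun ω => (Y ω, Z ω)) s.2.2)) :=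
    ent_comp_eq_sum μ (fun ω => (X ω, X' ω, Y ω, Z ω)) (fun t => t.2.2)
  have hci' : ∀ s : ℚ × ℚ × ℚ × T,
      pm μ (fun ω => (X ω, X' ω, Y ω, Z ω)) s * pm μ (fun ω => (Y ω, Z ω)) s.2.2
        = pm μ (fun ω => (X ω, Y ω, Z ω)) (s.1, s.2.2)
          * pm μ (fun ω => (X' ω, Y ω, Z ω)) s.2 := by
    rintro ⟨x, x', y, z⟩
    have e1 : pm μ (fun ω => (X ω, X' ω, Y ω, Z ω)) (x, x', y, z)
        = prb μ {ω | X ω = x ∧ X' ω = x' ∧ Y ω = y ∧ Z ω = z} :=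
      prb_congr μ (fun ω => by simp [Prod.ext_iff])
    have e2 : pm μ (fun ω => (Y ω, Z ω)) ((x, x', y, z) : ℚ × ℚ × ℚ × T).2.2
        = prb μ {ω | Y ω = y ∧ Z ω = z} :=
      prb_congr μ (fun ω => by simp [Prod.ext_iff])
    have e3 : pm μ (fun ω => (X ω, Y ω, Z ω))
          ((((x, x', y, z) : ℚ × ℚ × ℚ × T)).1, (((x, x', y, z) : ℚ × ℚ × ℚ × T)).2.2)
        = prb μ {ω | X ω = x ∧ Y ω = y ∧ Z ω = z} :=
      prb_congr μ (fun ω => by simp [Prod.ext_iff])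
    have e4 : pm μ (fun ω => (X' ω, Y ω, Z ω)) (((x, x', y, z) : ℚ × ℚ × ℚ × T)).2
        = prb μ {ω | X' ω = x' ∧ Y ω = y ∧ Z ω = z} :=
      prb_congr μ (fun ω => by simp [Prod.ext_iff])
    rw [e1, e2, e3, e4]
    exact hci x x' y z
  rw [ent_eq_pm_log, ha, hb, hq, ← Finset.sum_add_distrib, ← Finset.sum_sub_distrib]
  apply Finset.sum_congr rfl
  intro s _
  have hp0 : 0 ≤ pm μ (fun ω => (X ω, X' ω, Y ω, Z ω)) s :=
    pm_nonneg μ hμ0 _ _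
  rcases eq_or_lt_of_le hp0 with h0 | hpos
  · rw [← h0]
    simp
  · have hpa : pm μ (fun ω => (X ω, X' ω, Y ω, Z ω)) s
        ≤ pm μ (fun ω => (X ω, Y ω, Z ω)) (s.1, s.2.2) :=
      pm_mono μ hμ0 (fun ω => (X ω, X' ω, Y ω, Z ω)) (fun t => (t.1, t.2.2)) s
    have hpb : pm μ (fun ω => (X ω, X' ω, Y ω, Z ω)) s
        ≤ pm μ (fun ω => (X' ω, Y ω, Z ω)) s.2 :=
      pm_mono μ hμ0 (fun ω => (X ω, X' ω, Y ω, Z ω)) (fun t => t.2) s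
    have hpq : pm μ (fun ω => (X ω, X' ω, Y ω, Z ω)) s
        ≤ pm μ (fun ω => (Y ω, Z ω)) s.2.2 :=
      pm_mono μ hμ0 (fun ω => (X ω, X' ω, Y ω, Z ω)) (fun t => t.2.2) s
    set p := pm μ (fun ω => (X ω, X' ω, Y ω, Z ω)) s with hpdef
    set a := pm μ (fun ω => (X ω, Y ω, Z ω)) (s.1, s.2.2) with hadef
    set b := pm μ (fun ω => (X' ω, Y ω, Z ω)) s.2 with hbdef
    set q := pm μ (fun ω => (Y ω, Z ω)) s.2.2 with hqdef
    have ha' : 0 < a := lt_of_lt_of_le hpos hpa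
    have hb' : 0 < b := lt_of_lt_of_le hpos hpb
    have hq' : 0 < q := lt_of_lt_of_le hpos hpq
    have hkey : p * q = a * b := hci' s
    have hlg : Real.log p + Real.log q = Real.log a + Real.log b := by
      rw [← Real.log_mul hpos.ne' hq'.ne', ← Real.log_mul ha'.ne' hb'.ne', hkey]
    have hlp : Real.log p = Real.log a + Real.log b - Real.log q := by linarith
    rw [hlp]
    ring

end CondInd

/-- Conditional entropic BSG, first form: if `(X',Y,Z)` is a copy of
`(X,Y,Z)` with `X, X'` conditionally independent given `(Y,Z)`, then
`H[X - X' | Y,Z] ≤ 2 H[X+Y|Z] + H[Y|Z] + 2 H[X|Z] - 2 H[X,Y|Z]`. -/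
theorem conditional_entropic_BSG {Ω T : Type*} [Fintype Ω] (μ : Ω → ℝ) (hμ : IsProb μ)
    (X X' Y : Ω → ℚ) (Z : Ω → T)
    (hcopy : ∀ (x y : ℚ) (z : T),
      prb μ {ω | X' ω = x ∧ Y ω = y ∧ Z ω = z} = prb μ {ω | X ω = x ∧ Y ω = y ∧ Z ω = z})
    (hci : ∀ (x x' y : ℚ) (z : T),
      prb μ {ω | X ω = x ∧ X' ω = x' ∧ Y ω = y ∧ Z ω = z} * prb μ {ω | Y ω = y ∧ Z ω = z} =
        prb μ {ω | X ω = x ∧ Y ω = y ∧ Z ω = z} *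
          prb μ {ω | X' ω = x' ∧ Y ω = y ∧ Z ω = z}) :
    condEnt μ (fun ω => X ω - X' ω) (fun ω => (Y ω, Z ω)) ≤
      2 * condEnt μ (fun ω => X ω + Y ω) Z + condEnt μ Y Z + 2 * condEnt μ X Z
        - 2 * condEnt μ (fun ω => (X ω, Y ω)) Z := by
  have hμ0 := hμ.1
  have hpm : ∀ s : ℚ × ℚ × T, pm μ (fun ω => (X' ω, Y ω, Z ω)) s
      = pm μ (fun ω => (X ω, Y ω, Z ω)) s := by
    rintro ⟨x, y, z⟩
    have e1 : pm μ (fun ω => (X' ω, Y ω, Z ω)) (x, y, z)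
        = prb μ {ω | X' ω = x ∧ Y ω = y ∧ Z ω = z} :=
      prb_congr μ (fun ω => by simp [Prod.ext_iff])
    have e2 : pm μ (fun ω => (X ω, Y ω, Z ω)) (x, y, z)
        = prb μ {ω | X ω = x ∧ Y ω = y ∧ Z ω = z} :=
      prb_congr μ (fun ω => by simp [Prod.ext_iff])
    rw [e1, e2]
    exact hcopy x y z
  have e1 : ent μ (fun ω => (X ω - X' ω, Y ω, Z ω)) + ent μ Z
      ≤ ent μ (fun ω => (X ω - X' ω, Z ω)) + ent μ (fun ω => (Y ω, Z ω)) :=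
    ent_submod μ hμ (fun ω => X ω - X' ω) Y Z
  have e2 : ent μ (fun ω => (X' ω + Y ω, (X ω, X' ω), (X ω - X' ω, Z ω)))
      + ent μ (fun ω => (X ω - X' ω, Z ω))
      ≤ ent μ (fun ω => (X' ω + Y ω, X ω - X' ω, Z ω))
        + ent μ (fun ω => ((X ω, X' ω), (X ω - X' ω, Z ω))) :=
    ent_submod μ hμ (fun ω => X' ω + Y ω) (fun ω => (X ω, X' ω))
      (fun ω => (X ω - X' ω, Z ω))
  have e2l : ent μ (fun ω => (X' ω + Y ω, (X ω, X' ω), (X ω - X' ω, Z ω)))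
      = ent μ (fun ω => (X ω, X' ω, Y ω, Z ω)) := by
    have hg : Function.Injective (fun t : ℚ × ℚ × ℚ × T =>
        (t.2.1 + t.2.2.1, (t.1, t.2.1), (t.1 - t.2.1, t.2.2.2))) := by
      rintro ⟨x, x', y, z⟩ ⟨a, a', b, c⟩ h
      simp only [Prod.mk.injEq] at h
      obtain ⟨h1, ⟨h2, h3⟩, _, h5⟩ := h
      subst h2; subst h3; subst h5
      have : y = b := by linarith
      subst this; rfl
    exact ent_comp_inj μ (fun ω => (X ω, X' ω, Y ω, Z ω)) (fun t : ℚ × ℚ × ℚ × T => (t.2.1 + t.2.2.1, (t.1, t.2.1), (t.1 - t.2.1, t.2.2.2))) hg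
  have e2r : ent μ (fun ω => ((X ω, X' ω), (X ω - X' ω, Z ω)))
      = ent μ (fun ω => (X ω, X' ω, Z ω)) := by
    have hg : Function.Injective (fun t : ℚ × ℚ × T =>
        ((t.1, t.2.1), (t.1 - t.2.1, t.2.2))) := by
      rintro ⟨x, x', z⟩ ⟨a, a', c⟩ h
      simp only [Prod.mk.injEq] at h
      obtain ⟨⟨h1, h2⟩, _, h4⟩ := h
      subst h1; subst h2; subst h4; rfl
    exact ent_comp_inj μ (fun ω => (X ω, X' ω, Z ω)) (fun t : ℚ × ℚ × T => ((t.1, t.2.1), (t.1 - t.2.1, t.2.2))) hg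
  have e3 : ent μ (fun ω => (X ω + Y ω, X' ω + Y ω, Z ω))
      = ent μ (fun ω => (X' ω + Y ω, X ω - X' ω, Z ω)) := by
    have hg : Function.Injective (fun t : ℚ × ℚ × T =>
        (t.2.1 + t.1, t.1, t.2.2)) := by
      rintro ⟨s, d, z⟩ ⟨s', d', z'⟩ h
      simp only [Prod.mk.injEq] at h
      obtain ⟨h1, h2, h3⟩ := h
      subst h2; subst h3
      have : d = d' := by linarith
      subst this; rfl
    have hfun : ent μ (fun ω => (X ω + Y ω, X' ω + Y ω, Z ω))
        = ent μ (fun ω => ((X ω - X' ω) + (X' ω + Y ω), X' ω + Y ω, Z ω)) :=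
      ent_congr_fun μ (fun ω => by
        rw [show X ω + Y ω = (X ω - X' ω) + (X' ω + Y ω) from by ring])
    rw [hfun]
    exact ent_comp_inj μ (fun ω => (X' ω + Y ω, X ω - X' ω, Z ω)) (fun t : ℚ × ℚ × T => (t.2.1 + t.1, t.1, t.2.2)) hg
  have e4 : ent μ (fun ω => (X ω + Y ω, X' ω + Y ω, Z ω)) + ent μ Z
      ≤ ent μ (fun ω => (X ω + Y ω, Z ω)) + ent μ (fun ω => (X' ω + Y ω, Z ω)) :=
    ent_submod μ hμ (fun ω => X ω + Y ω) (fun ω => X' ω + Y ω) Z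
  have e5 : ent μ (fun ω => (X ω, X' ω, Z ω)) + ent μ Z
      ≤ ent μ (fun ω => (X ω, Z ω)) + ent μ (fun ω => (X' ω, Z ω)) :=
    ent_submod μ hμ X X' Z
  have e6 : ent μ (fun ω => (X ω, X' ω, Y ω, Z ω))
      = ent μ (fun ω => (X ω, Y ω, Z ω)) + ent μ (fun ω => (X' ω, Y ω, Z ω))
        - ent μ (fun ω => (Y ω, Z ω)) :=
    ent_condindep μ hμ0 X X' Y Z hci
  have e7 : ent μ (fun ω => (X' ω, Y ω, Z ω)) = ent μ (fun ω => (X ω, Y ω, Z ω)) :=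
    ent_congr_pm μ hpm
  have e8 : ent μ (fun ω => (X' ω, Z ω)) = ent μ (fun ω => (X ω, Z ω)) :=
    ent_comp_congr_pm μ hpm (fun t => (t.1, t.2.2))
  have e9 : ent μ (fun ω => (X' ω + Y ω, Z ω)) = ent μ (fun ω => (X ω + Y ω, Z ω)) :=
    ent_comp_congr_pm μ hpm (fun t => (t.1 + t.2.1, t.2.2))
  have e10 : ent μ (fun ω => ((X ω, Y ω), Z ω)) = ent μ (fun ω => (X ω, Y ω, Z ω)) := by
    have hg : Function.Injective (fun t : ℚ × ℚ × T => ((t.1, t.2.1), t.2.2)) := by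
      rintro ⟨x, y, z⟩ ⟨a, b, c⟩ h
      simp only [Prod.mk.injEq] at h
      obtain ⟨⟨h1, h2⟩, h3⟩ := h
      subst h1; subst h2; subst h3; rfl
    exact ent_comp_inj μ (fun ω => (X ω, Y ω, Z ω)) (fun t : ℚ × ℚ × T => ((t.1, t.2.1), t.2.2)) hg
  show ent μ (fun ω => (X ω - X' ω, Y ω, Z ω)) - ent μ (fun ω => (Y ω, Z ω))
      ≤ 2 * (ent μ (fun ω => (X ω + Y ω, Z ω)) - ent μ Z)
        + (ent μ (fun ω => (Y ω, Z ω)) - ent μ Z)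
        + 2 * (ent μ (fun ω => (X ω, Z ω)) - ent μ Z)
        - 2 * (ent μ (fun ω => ((X ω, Y ω), Z ω)) - ent μ Z)
  linarith [e1, e2, e2l, e2r, e3, e4, e5, e6, e7, e8, e9, e10]
end
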